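/- For all a, b > 0, ε > 0 and q ∈ ℝ, one has the second-order expansion α*_ε(a, b, (ε/2)·log(a/b) + q/2) = β_ε(a,b) + (ε/4)·(a - b)·q + (q²/4)·∫₀¹ (a·𝔥(λq/ε) + b·𝔥(-λq/ε))·(1 - λ) dλ. -/

import Mathlib

open Real

/-- The logarithmic mean `Λ(s,t)`. -/
noncomputable def logMean (s t : ℝ) : ℝ :=
  if s = t then s else (s - t) / (Real.log s - Real.log t)

/-- The harmonic-logarithmic mean `Λ_H(s,t) = st/Λ(s,t)`. -/
noncomputable def harmLogMean (s t : ℝ) : ℝ := s * t / logMean s t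

/-- `α*_ε(a,b,ξ) = ε ∫₀^ξ sinh(x/ε) Λ_H(a e^{-x/ε}, b e^{x/ε}) dx`. -/
noncomputable def alphaEps (ε a b ξ : ℝ) : ℝ :=
  ε * ∫ x in (0:ℝ)..ξ,
    Real.sinh (x / ε) * harmLogMean (a * Real.exp (-x / ε)) (b * Real.exp (x / ε))

/-- `β_ε(a,b) = α*_ε(a, b, (ε/2) log(a/b))`. -/
noncomputable def betaEps (ε a b : ℝ) : ℝ :=
  alphaEps ε a b ((ε / 2) * Real.log (a / b))

/-- `𝔥(s) = (1/4)(e^s - 1 - s)/sinh²(s/2)` for `s ≠ 0`, with `𝔥(0) = 1/2`. -/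
noncomputable def hFun (s : ℝ) : ℝ :=
  if s = 0 then 1 / 2 else 1 / 4 * (Real.exp s - 1 - s) / Real.sinh (s / 2) ^ 2

open Filter MeasureTheory intervalIntegral Set Topology

noncomputable def Pfun (s : ℝ) : ℝ := if s = 0 then 1 else s * Real.exp s / (Real.exp s - 1)

lemma exp_sub_one_ne_zero {s : ℝ} (hs : s ≠ 0) : Real.exp s - 1 ≠ 0 := by
  intro h
  apply hs
  have : Real.exp s = Real.exp 0 := by rw [Real.exp_zero]; linarith
  exact Real.exp_injective this

lemma tendsto_exp_slope : Tendsto (fun s : ℝ => (Real.exp s - 1) / s) (𝓝[≠] 0) (𝓝 1) := by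
  have h := (Real.hasDerivAt_exp 0)
  rw [hasDerivAt_iff_tendsto_slope] at h
  simp only [Real.exp_zero] at h
  refine h.congr fun x => ?_
  simp [slope_def_field]

lemma tendsto_sinh_slope : Tendsto (fun s : ℝ => Real.sinh s / s) (𝓝[≠] 0) (𝓝 1) := by
  have h := (Real.hasDerivAt_sinh 0)
  rw [hasDerivAt_iff_tendsto_slope] at h
  simp only [Real.cosh_zero, Real.sinh_zero] at h
  refine h.congr fun x => ?_
  simp [slope_def_field]

lemma tendsto_exp_quad : Tendsto (fun s : ℝ => (Real.exp s - 1 - s) / s ^ 2) (𝓝[≠] 0) (𝓝 (1/2)) := by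
  apply HasDerivAt.lhopital_zero_nhdsNE (f' := fun s => Real.exp s - 1) (g' := fun s => 2 * s)
  · filter_upwards with x
    exact ((Real.hasDerivAt_exp x).sub_const 1).sub (hasDerivAt_id' x)
  · filter_upwards with x
    simpa using hasDerivAt_pow 2 x
  · filter_upwards [self_mem_nhdsWithin] with x (hx : x ≠ 0)
    simpa using hx
  · apply tendsto_nhdsWithin_of_tendsto_nhds
    have : Continuous fun s : ℝ => Real.exp s - 1 - s := by continuity
    simpa using this.tendsto 0
  · apply tendsto_nhdsWithin_of_tendsto_nhds
    have : Continuous fun s : ℝ => s ^ 2 := by continuity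
    simpa using this.tendsto 0
  · have : Tendsto (fun s : ℝ => ((Real.exp s - 1) / s) / 2) (𝓝[≠] 0) (𝓝 (1/2)) :=
      tendsto_exp_slope.div_const 2
    refine this.congr fun x => ?_
    rw [div_div, mul_comm]

lemma continuousAt_of_punctured {f : ℝ → ℝ} {x : ℝ}
    (h : Tendsto f (𝓝[≠] x) (𝓝 (f x))) : ContinuousAt f x := by
  rw [ContinuousAt, ← nhdsNE_sup_pure, tendsto_sup]
  exact ⟨h, tendsto_pure_nhds f x⟩

lemma continuous_Pfun : Continuous Pfun := by
  rw [continuous_iff_continuousAt]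
  intro x
  rcases eq_or_ne x 0 with rfl | hx
  · apply continuousAt_of_punctured
    have h1 : Tendsto (fun s : ℝ => Real.exp s / ((Real.exp s - 1) / s)) (𝓝[≠] 0) (𝓝 1) := by
      have := (Real.continuous_exp.tendsto 0).mono_left nhdsWithin_le_nhds |>.div
        tendsto_exp_slope one_ne_zero
      rw [Real.exp_zero, div_one] at this
      exact this
    have h2 : Pfun 0 = 1 := by simp [Pfun]
    rw [h2]
    refine h1.congr' ?_
    filter_upwards [self_mem_nhdsWithin] with s (hs : s ≠ 0)
    rw [Pfun, if_neg hs, div_div_eq_mul_div, mul_comm]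
  · have hform : ContinuousAt (fun s => s * Real.exp s / (Real.exp s - 1)) x := by
      exact (continuousAt_id.mul Real.continuous_exp.continuousAt).div
        (Real.continuous_exp.continuousAt.sub continuousAt_const) (exp_sub_one_ne_zero hx)
    refine hform.congr ?_
    filter_upwards [isOpen_compl_singleton.mem_nhds hx] with s (hs : s ≠ 0)
    rw [Pfun, if_neg hs]

lemma hFun_formula {s : ℝ} (hs : s ≠ 0) :
    hFun s = Real.exp s * ((Real.exp s - 1 - s) / (Real.exp s - 1) ^ 2) := by
  rw [hFun, if_neg hs]
  have hu : Real.exp (s/2) * Real.exp (s/2) = Real.exp s := by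
    rw [← Real.exp_add]; ring_nf
  have hsinh : Real.sinh (s/2) = (Real.exp (s/2) - (Real.exp (s/2))⁻¹) / 2 := by
    rw [Real.sinh_eq, Real.exp_neg]
  have hu0 : Real.exp (s/2) ≠ 0 := (Real.exp_pos _).ne'
  have hsh : Real.sinh (s/2) ≠ 0 := by
    rw [Real.sinh_ne_zero]; intro h; exact hs (by linarith)
  have he1 : Real.exp s - 1 ≠ 0 := exp_sub_one_ne_zero hs
  rw [hsinh, ← hu]
  have hne : Real.exp (s/2) * Real.exp (s/2) - 1 ≠ 0 := by rw [hu]; exact exp_sub_one_ne_zero hs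
  field_simp
  ring

lemma tendsto_half_punctured : Tendsto (fun s : ℝ => s / 2) (𝓝[≠] (0:ℝ)) (𝓝[≠] (0:ℝ)) := by
  apply tendsto_nhdsWithin_of_tendsto_nhds_of_eventually_within
  · have : Tendsto (fun s : ℝ => s / 2) (𝓝 0) (𝓝 (0/2)) :=
      (continuous_id.div_const 2).tendsto 0
    simpa using this.mono_left nhdsWithin_le_nhds
  · filter_upwards [self_mem_nhdsWithin] with s (hs : s ≠ 0)
    simpa [Set.mem_compl_singleton_iff] using div_ne_zero hs two_ne_zero

lemma tendsto_half_sinh : Tendsto (fun s : ℝ => (s/2) / Real.sinh (s/2)) (𝓝[≠] 0) (𝓝 1) := by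
  have h := (tendsto_sinh_slope.comp tendsto_half_punctured).inv₀ one_ne_zero
  simp only [inv_one] at h
  refine h.congr fun x => ?_
  simp [Function.comp, inv_div]

lemma continuous_hFun : Continuous hFun := by
  rw [continuous_iff_continuousAt]
  intro x
  rcases eq_or_ne x 0 with rfl | hx
  · apply continuousAt_of_punctured
    have h1 : Tendsto (fun s : ℝ =>
        (Real.exp s - 1 - s) / s ^ 2 * ((s/2) / Real.sinh (s/2)) * ((s/2) / Real.sinh (s/2)))
        (𝓝[≠] 0) (𝓝 (1/2 * 1 * 1)) :=
      (tendsto_exp_quad.mul tendsto_half_sinh).mul tendsto_half_sinh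
    have h2 : hFun 0 = 1/2 := by simp [hFun]
    rw [h2]
    have : (1:ℝ)/2 * 1 * 1 = 1/2 := by norm_num
    rw [this] at h1
    refine h1.congr' ?_
    filter_upwards [self_mem_nhdsWithin] with s (hs : s ≠ 0)
    have hsh : Real.sinh (s/2) ≠ 0 := by
      rw [Real.sinh_ne_zero]; intro h; exact hs (by linarith)
    rw [hFun, if_neg hs]
    field_simp
    ring
  · have hsh : Real.sinh (x/2) ≠ 0 := by
      rw [Real.sinh_ne_zero]; intro h; exact hx (by linarith)
    have hform : ContinuousAt (fun s => 1 / 4 * (Real.exp s - 1 - s) / Real.sinh (s / 2) ^ 2) x := by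
      apply ContinuousAt.div
      · fun_prop
      · fun_prop
      · exact pow_ne_zero 2 hsh
    refine hform.congr ?_
    filter_upwards [isOpen_compl_singleton.mem_nhds hx] with s (hs : s ≠ 0)
    rw [hFun, if_neg hs]

lemma hasDerivAt_Pfun {s : ℝ} (hs : s ≠ 0) : HasDerivAt Pfun (hFun s) s := by
  have he1 : Real.exp s - 1 ≠ 0 := exp_sub_one_ne_zero hs
  have h : HasDerivAt (fun t => t * Real.exp t / (Real.exp t - 1))
      (((1 * Real.exp s + s * Real.exp s) * (Real.exp s - 1) -
        s * Real.exp s * Real.exp s) / (Real.exp s - 1) ^ 2) s :=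
    ((hasDerivAt_id s).mul (Real.hasDerivAt_exp s)).div
      ((Real.hasDerivAt_exp s).sub_const 1) he1
  have hval : ((1 * Real.exp s + s * Real.exp s) * (Real.exp s - 1) -
      s * Real.exp s * Real.exp s) / (Real.exp s - 1) ^ 2 = hFun s := by
    rw [hFun_formula hs]
    field_simp
    ring
  rw [hval] at h
  refine h.congr_of_eventuallyEq ?_
  filter_upwards [isOpen_compl_singleton.mem_nhds hs] with t (ht : t ≠ 0)
  rw [Pfun, if_neg ht]

noncomputable def wFun (ε a b y : ℝ) : ℝ :=
  2⁻¹ * (a * Pfun (2 * y / ε) - b * Pfun (-(2 * y) / ε))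

noncomputable def mFun (ε a b u : ℝ) : ℝ := a * hFun (u / ε) + b * hFun (-u / ε)

lemma continuous_wFun (ε a b : ℝ) : Continuous (wFun ε a b) := by
  unfold wFun
  exact continuous_const.mul
    ((continuous_const.mul (continuous_Pfun.comp ((continuous_const.mul continuous_id).div_const ε))).sub
     (continuous_const.mul (continuous_Pfun.comp ((continuous_const.mul continuous_id).neg.div_const ε))))

lemma continuous_mFun (ε a b : ℝ) : Continuous (mFun ε a b) := by
  unfold mFun
  exact (continuous_const.mul (continuous_hFun.comp (continuous_id.div_const ε))).add
    (continuous_const.mul (continuous_hFun.comp (continuous_id.neg.div_const ε)))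

lemma ne_zero_of_mem_Ioo {r x : ℝ} (hx : x ∈ Set.Ioo (min 0 r) (max 0 r)) : x ≠ 0 := by
  rintro rfl
  rcases hx with ⟨h1, h2⟩
  rcases le_or_gt r 0 with h | h
  · simp [max_eq_left h] at h2
  · simp [min_eq_left h.le] at h1

lemma E1 {ε : ℝ} (hε : ε ≠ 0) (r : ℝ) :
    ∫ u in (0:ℝ)..r, hFun (u / ε) = ε * Pfun (r / ε) - ε := by
  have hF : ∀ x ∈ Set.Ioo (min 0 r) (max 0 r),
      HasDerivWithinAt (fun u => ε * Pfun (u / ε)) (hFun (x / ε)) (Set.Ioi x) x := by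
    intro x hx
    have hx0 : x ≠ 0 := ne_zero_of_mem_Ioo hx
    have h := ((hasDerivAt_Pfun (div_ne_zero hx0 hε)).comp x
      ((hasDerivAt_id x).div_const ε)).const_mul ε
    have : ε * (hFun (x / ε) * (1 / ε)) = hFun (x / ε) := by field_simp
    rw [this] at h
    exact h.hasDerivWithinAt
  have := intervalIntegral.integral_eq_sub_of_hasDeriv_right
    ((continuous_const.mul (continuous_Pfun.comp (continuous_id.div_const ε))).continuousOn)
    hF ((continuous_hFun.comp (continuous_id.div_const ε)).intervalIntegrable 0 r)
  rw [this]
  simp [Pfun]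

lemma E2 {ε : ℝ} (hε : ε ≠ 0) (r : ℝ) :
    ∫ u in (0:ℝ)..r, hFun (-u / ε) = -(ε * Pfun (-r / ε)) + ε := by
  have hF : ∀ x ∈ Set.Ioo (min 0 r) (max 0 r),
      HasDerivWithinAt (fun u => -(ε * Pfun (-u / ε))) (hFun (-x / ε)) (Set.Ioi x) x := by
    intro x hx
    have hx0 : x ≠ 0 := ne_zero_of_mem_Ioo hx
    have h := (((hasDerivAt_Pfun (div_ne_zero (neg_ne_zero.mpr hx0) hε)).comp x
      (((hasDerivAt_id x).neg).div_const ε)).const_mul ε).neg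
    have : -(ε * (hFun (-x / ε) * (-1 / ε))) = hFun (-x / ε) := by field_simp
    rw [this] at h
    exact h.hasDerivWithinAt
  have := intervalIntegral.integral_eq_sub_of_hasDeriv_right
    ((continuous_const.mul (continuous_Pfun.comp (continuous_id.neg.div_const ε))).neg.continuousOn)
    hF ((continuous_hFun.comp (continuous_id.neg.div_const ε)).intervalIntegrable 0 r)
  rw [this]
  simp [Pfun]

lemma Meval {ε : ℝ} (hε : ε ≠ 0) (a b r : ℝ) :
    ∫ u in (0:ℝ)..r, mFun ε a b u =
      ε * (a * Pfun (r / ε) - b * Pfun (-r / ε)) - ε * (a - b) := by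
  have h1 : IntervalIntegrable (fun u => a * hFun (u / ε)) volume 0 r :=
    ((continuous_const.mul (continuous_hFun.comp (continuous_id.div_const ε))).intervalIntegrable 0 r)
  have h2 : IntervalIntegrable (fun u => b * hFun (-u / ε)) volume 0 r :=
    ((continuous_const.mul (continuous_hFun.comp (continuous_id.neg.div_const ε))).intervalIntegrable 0 r)
  unfold mFun
  rw [intervalIntegral.integral_add h1 h2, intervalIntegral.integral_const_mul,
    intervalIntegral.integral_const_mul, E1 hε, E2 hε]
  ring

lemma wFun_half (ε a b r : ℝ) :
    wFun ε a b (r / 2) = 2⁻¹ * (a * Pfun (r / ε) - b * Pfun (-r / ε)) := by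
  have h1 : 2 * (r / 2) = r := by ring
  rw [wFun, h1]

lemma key {ε : ℝ} (hε : ε ≠ 0) (a b q : ℝ) :
    ε * ∫ y in (0:ℝ)..(q / 2), wFun ε a b y =
      ε / 4 * (a - b) * q +
        1 / 4 * (q * (∫ u in (0:ℝ)..q, mFun ε a b u) -
          ∫ u in (0:ℝ)..q, u * mFun ε a b u) := by
  set Φ : ℝ → ℝ := fun r =>
    ε * (∫ y in (0:ℝ)..(r / 2), wFun ε a b y) - ε / 4 * (a - b) * r -
      1 / 4 * (r * (∫ u in (0:ℝ)..r, mFun ε a b u) -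
        ∫ u in (0:ℝ)..r, u * mFun ε a b u) with hΦdef
  have hw := continuous_wFun ε a b
  have hm := continuous_mFun ε a b
  have hum : Continuous fun u => u * mFun ε a b u := continuous_id.mul hm
  have hΦ : ∀ r, HasDerivAt Φ 0 r := by
    intro r
    have hA : HasDerivAt (fun r => ∫ y in (0:ℝ)..(r / 2), wFun ε a b y)
        (wFun ε a b (r / 2) * (1 / 2)) r := by
      have h0 : HasDerivAt (fun t => ∫ y in (0:ℝ)..t, wFun ε a b y)
          (wFun ε a b (r / 2)) (r / 2) :=
        intervalIntegral.integral_hasDerivAt_right (hw.intervalIntegrable _ _)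
          (hw.stronglyMeasurableAtFilter _ _) hw.continuousAt
      exact h0.comp r ((hasDerivAt_id r).div_const 2)
    have hM : HasDerivAt (fun r => ∫ u in (0:ℝ)..r, mFun ε a b u) (mFun ε a b r) r :=
      intervalIntegral.integral_hasDerivAt_right (hm.intervalIntegrable _ _)
        (hm.stronglyMeasurableAtFilter _ _) hm.continuousAt
    have hN : HasDerivAt (fun r => ∫ u in (0:ℝ)..r, u * mFun ε a b u) (r * mFun ε a b r) r :=
      intervalIntegral.integral_hasDerivAt_right (hum.intervalIntegrable _ _)
        (hum.stronglyMeasurableAtFilter _ _) hum.continuousAt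
    have hcomb := ((hA.const_mul ε).sub ((hasDerivAt_id r).const_mul (ε / 4 * (a - b)))).sub
      ((((hasDerivAt_id r).mul hM).sub hN).const_mul (1 / 4))
    have hval : ε * (wFun ε a b (r / 2) * (1 / 2)) - ε / 4 * (a - b) * 1 -
        1 / 4 * ((1 * (∫ u in (0:ℝ)..r, mFun ε a b u) + r * mFun ε a b r) -
          r * mFun ε a b r) = 0 := by
      rw [wFun_half, Meval hε]
      ring
    simp only [id_eq] at hcomb
    rw [hval] at hcomb
    exact hcomb
  have hconst := is_const_of_deriv_eq_zero (fun r => (hΦ r).differentiableAt)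
    (fun r => (hΦ r).deriv) q 0
  have h0 : Φ 0 = 0 := by simp [hΦdef]
  rw [h0] at hconst
  have : Φ q = 0 := hconst
  rw [hΦdef] at this
  simp only at this
  linarith

set_option maxHeartbeats 1000000 in
lemma integrand_eq {ε a b : ℝ} (hε : 0 < ε) (ha : 0 < a) (hb : 0 < b) (x : ℝ) :
    Real.sinh (x / ε) * harmLogMean (a * Real.exp (-x / ε)) (b * Real.exp (x / ε)) =
      wFun ε a b (x - ε / 2 * Real.log (a / b)) := by
  have hεne : ε ≠ 0 := hε.ne'
  set c := Real.log (a / b) with hc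
  set u := Real.exp (c / 2) with hu
  have hu0 : u ≠ 0 := (Real.exp_pos _).ne'
  have hu2 : u * u = a / b := by
    rw [hu, ← Real.exp_add, show c / 2 + c / 2 = c by ring]
    exact Real.exp_log (div_pos ha hb)
  have hab : b * (u * u) = a := by rw [hu2]; field_simp
  set y := x - ε / 2 * c with hy
  have hxε : x / ε = c / 2 + y / ε := by rw [hy]; field_simp; ring
  set v := Real.exp (y / ε) with hv
  have hv0 : v ≠ 0 := (Real.exp_pos _).ne'
  have hexp : Real.exp (x / ε) = u * v := by rw [hxε, Real.exp_add]
  have hexpneg : Real.exp (-x / ε) = (u * v)⁻¹ := by rw [neg_div, Real.exp_neg, hexp]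
  clear_value c u y v
  by_cases hy0 : y = 0
  · have hv1 : v = 1 := by rw [hv, hy0]; simp
    have hst : a * Real.exp (-x / ε) = b * Real.exp (x / ε) := by
      rw [hexp, hexpneg, hv1, mul_one, ← hab]
      field_simp
    rw [hst, harmLogMean, logMean, if_pos rfl]
    have htne : b * Real.exp (x / ε) ≠ 0 := by positivity
    rw [mul_div_assoc, div_self htne, mul_one]
    rw [Real.sinh_eq, show -(x/ε) = -x/ε from (neg_div _ _).symm, hexpneg, hexp, hv1, mul_one,
      hy0, wFun]
    simp only [mul_zero, zero_div, neg_zero, Pfun, if_pos rfl, ↓reduceIte]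
    rw [← hab]
    field_simp
  · have hτ : 2 * y / ε ≠ 0 := div_ne_zero (mul_ne_zero two_ne_zero hy0) hεne
    have hexpτ : Real.exp (2 * y / ε) = v * v := by
      rw [hv, ← Real.exp_add]; congr 1; ring
    have hvv1 : v * v ≠ 1 := by
      intro h
      apply hτ
      have : Real.exp (2 * y / ε) = Real.exp 0 := by rw [hexpτ, h, Real.exp_zero]
      exact Real.exp_injective this
    have hne : a * (u * v)⁻¹ ≠ b * (u * v) := by
      intro h
      apply hvv1
      rw [← hab] at h
      field_simp at h
      nlinarith [h, hu0, hv0]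
    have hne0 : a * Real.exp (-x / ε) ≠ b * Real.exp (x / ε) := by
      rw [hexpneg, hexp]; exact hne
    have hlog : Real.log (a * Real.exp (-x / ε)) - Real.log (b * Real.exp (x / ε))
        = -(2 * y / ε) := by
      rw [Real.log_mul ha.ne' (Real.exp_ne_zero _), Real.log_mul hb.ne' (Real.exp_ne_zero _),
        Real.log_exp, Real.log_exp]
      have hcd : Real.log a - Real.log b = c := by
        rw [hc]; exact (Real.log_div ha.ne' hb.ne').symm
      rw [neg_div, hxε]
      linear_combination hcd
    rw [harmLogMean, logMean, if_neg hne0, hlog]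
    rw [Real.sinh_eq, show -(x/ε) = -x/ε from (neg_div _ _).symm, hexpneg, hexp]
    rw [wFun, show -(2 * y) / ε = -(2 * y / ε) from neg_div _ _]
    have hτn : -(2 * y / ε) ≠ 0 := neg_ne_zero.mpr hτ
    rw [Pfun, if_neg hτ, Pfun, if_neg hτn, hexpτ, Real.exp_neg, hexpτ]
    have hvv1' : (v * v)⁻¹ - 1 ≠ 0 := by
      rw [sub_ne_zero]
      intro h
      apply hvv1
      field_simp at h
      linarith
    have hvv1'' : v * v - 1 ≠ 0 := sub_ne_zero.mpr hvv1
    have hsub : a * (u * v)⁻¹ - b * (u * v) ≠ 0 := sub_ne_zero.mpr hne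
    rw [div_div_eq_mul_div]
    rw [← hab] at hsub ⊢
    have h1v : (1:ℝ) - v * v ≠ 0 := sub_ne_zero.mpr fun h => hvv1 h.symm
    have hD1 : u^4*v^2*b*ε*2 - u^4*v^4*b*ε*2 ≠ 0 := by
      have he : u^4*v^2*b*ε*2 - u^4*v^4*b*ε*2 = (u^4*v^2*b*ε*2) * (1 - v*v) := by ring
      rw [he]
      exact mul_ne_zero (by positivity) h1v
    have hD2 : v^2*ε - v^4*ε ≠ 0 := by
      have he : v^2*ε - v^4*ε = (v^2*ε) * (1 - v*v) := by ring
      rw [he]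
      exact mul_ne_zero (by positivity) h1v
    field_simp [hu0, hv0, hτ, hvv1'', hvv1', hsub, hD1, hD2]
    have hinv : (u ^ 4 * v ^ 2 * b * ε * 2 - u ^ 4 * v ^ 4 * b * ε * 2) *
        (u ^ 4 * v ^ 2 * b * ε * 2 - u ^ 4 * v ^ 4 * b * ε * 2)⁻¹ = 1 := mul_inv_cancel₀ hD1
    rw [show v ^ 2 - 1 = -(1 - v ^ 2) by ring, div_neg]
    ring

lemma alphaEps_eq {ε a b : ℝ} (hε : 0 < ε) (ha : 0 < a) (hb : 0 < b) (ξ : ℝ) :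
    alphaEps ε a b ξ =
      ε * ∫ x in (-(ε / 2 * Real.log (a / b)))..(ξ - ε / 2 * Real.log (a / b)),
        wFun ε a b x := by
  unfold alphaEps
  congr 1
  rw [intervalIntegral.integral_congr
    (g := fun x => wFun ε a b (x - ε / 2 * Real.log (a / b)))
    (fun x _ => integrand_eq hε ha hb x)]
  rw [intervalIntegral.integral_comp_sub_right _ (ε / 2 * Real.log (a / b)), zero_sub]


/-- Second-order expansion of `α*_ε` around the force `(ε/2) log(a/b)`. -/
theorem alphaEps_second_order_expansion (ε a b q : ℝ)
    (hε : 0 < ε) (ha : 0 < a) (hb : 0 < b) :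
    alphaEps ε a b ((ε / 2) * Real.log (a / b) + q / 2) =
      betaEps ε a b + ε / 4 * (a - b) * q +
        q ^ 2 / 4 *
          ∫ lam in (0:ℝ)..1,
            (a * hFun (lam * q / ε) + b * hFun (-(lam * q) / ε)) * (1 - lam) := by
  by_cases hq : q = 0
  · subst hq
    simp [betaEps]
  · have hw := continuous_wFun ε a b
    have hm := continuous_mFun ε a b
    have h1 := alphaEps_eq hε ha hb (ε / 2 * Real.log (a / b) + q / 2)
    rw [show ε / 2 * Real.log (a / b) + q / 2 - ε / 2 * Real.log (a / b) = q / 2 by ring] at h1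
    have h2 : betaEps ε a b =
        ε * ∫ x in (-(ε / 2 * Real.log (a / b)))..(0:ℝ), wFun ε a b x := by
      rw [betaEps, alphaEps_eq hε ha hb, sub_self]
    have hsplit := intervalIntegral.integral_add_adjacent_intervals
      (hw.intervalIntegrable (μ := volume) (-(ε / 2 * Real.log (a / b))) 0)
      (hw.intervalIntegrable (μ := volume) 0 (q / 2))
    have hkey := key hε.ne' a b q
    have hpt : ∀ lam : ℝ, lam ∈ Set.uIcc (0:ℝ) 1 →
        (a * hFun (lam * q / ε) + b * hFun (-(lam * q) / ε)) * (1 - lam)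
          = q⁻¹ * ((fun u => mFun ε a b u * (q - u)) (lam * q)) := by
      intro lam _
      show _ = q⁻¹ * (mFun ε a b (lam * q) * (q - lam * q))
      rw [mFun]
      field_simp
    have hsubst : q ^ 2 / 4 *
        (∫ lam in (0:ℝ)..1,
          (a * hFun (lam * q / ε) + b * hFun (-(lam * q) / ε)) * (1 - lam))
        = 1 / 4 * (q * (∫ u in (0:ℝ)..q, mFun ε a b u) -
            ∫ u in (0:ℝ)..q, u * mFun ε a b u) := by
      rw [intervalIntegral.integral_congr hpt, intervalIntegral.integral_const_mul,
        intervalIntegral.integral_comp_mul_right (fun u => mFun ε a b u * (q - u)) hq]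
      simp only [zero_mul, one_mul, smul_eq_mul]
      have hsub2 : ∫ u in (0:ℝ)..q, mFun ε a b u * (q - u)
          = q * (∫ u in (0:ℝ)..q, mFun ε a b u) - ∫ u in (0:ℝ)..q, u * mFun ε a b u := by
        rw [intervalIntegral.integral_congr
          (g := fun u => q * mFun ε a b u - u * mFun ε a b u) (fun u _ => by ring)]
        have hi1 : IntervalIntegrable (fun u : ℝ => q * mFun ε a b u) volume 0 q :=
          Continuous.intervalIntegrable (continuous_const.mul hm) _ _
        have hi2 : IntervalIntegrable (fun u : ℝ => u * mFun ε a b u) volume 0 q :=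
          Continuous.intervalIntegrable (continuous_id'.mul hm) _ _
        rw [intervalIntegral.integral_sub hi1 hi2, intervalIntegral.integral_const_mul]
      rw [hsub2]
      field_simp
    rw [h1, hsubst, h2]
    rw [← hsplit]
    rw [mul_add]
    rw [hkey]
    ring
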